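/- Let φ : ℚ[y1,y3,y4] → ℚ[y1,y3,y4] be the ℚ-algebra endomorphism determined by φ(y1) = k*y1, φ(y3) = a1*y1^3 + a2*y3, and φ(y4) = b1*y1^4 + b2*y1*y3 + b3*y4, where k, a1, a2, b1, b2, b3 ∈ ℚ. If φ(g8) ∈ I, φ(g9) ∈ I and φ(g12) ∈ I, then either (a1, a2, b1, b2, b3) = (0, k^3, 0, 0, k^4), or (a1, a2, b1, b2, b3) = (k^3, −k^3, k^4, −2*k^4, k^4). (This is the rigidity computation for X = E6/A6·S1: every degree-preserving endomorphism of H*(X;ℚ) sending the Kaehlerian class y1 to k*y1 is either the Adams operator ψ^k or ψ^k composed with the involution τ induced by the symmetry of the E6 Dynkin diagram.) -/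

import Mathlib

open MvPolynomial

private lemma E6aux_sq (x : ℚ) (m : ℤ) (hm : ¬ (3:ℤ) ∣ m) : x ^ 2 ≠ 3 * (m:ℚ) := by
  intro h
  have hd0 : (x.den : ℚ) ≠ 0 := Nat.cast_ne_zero.mpr x.den_nz
  have h1 : (x.num : ℚ) ^ 2 = 3 * (m:ℚ) * (x.den : ℚ) ^ 2 := by
    have hx := Rat.num_div_den x
    rw [← hx] at h
    field_simp at h
    linear_combination h
  have h2 : x.num ^ 2 = 3 * m * (x.den : ℤ) ^ 2 := by exact_mod_cast h1
  have hp3 : Prime (3:ℤ) := Int.prime_three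
  have h3 : (3:ℤ) ∣ x.num :=
    hp3.dvd_of_dvd_pow (n := 2) ⟨m * (x.den:ℤ)^2, by linarith⟩
  obtain ⟨t, ht⟩ := h3
  have h5 : m * (x.den:ℤ)^2 = 3 * t^2 := by
    rw [ht] at h2; nlinarith [h2]
  have h4 : (3:ℤ) ∣ (x.den : ℤ) := by
    rcases (hp3.dvd_mul.mp ⟨t^2, h5⟩) with h'|h'
    · exact absurd h' hm
    · exact hp3.dvd_of_dvd_pow (n := 2) h'
  have d1 : (3:ℕ) ∣ x.num.natAbs := by
    have := Int.natAbs_dvd_natAbs.mpr ⟨t, ht⟩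
    simpa using this
  have d2 : (3:ℕ) ∣ x.den := by
    have := Int.natAbs_dvd_natAbs.mpr h4
    simpa using this
  have hg := Nat.dvd_gcd d1 d2
  have hred : Nat.gcd x.num.natAbs x.den = 1 := x.reduced
  rw [hred] at hg
  norm_num at hg

noncomputable def StE6 : MvPolynomial (Fin 3) ℚ →ₐ[ℚ] Polynomial (MvPolynomial (Fin 3) ℚ) :=
  aeval (fun i => Polynomial.C (X i) * Polynomial.X ^ (![1,3,4] i : ℕ))

private lemma coeff_mul_CXpow (p : Polynomial (MvPolynomial (Fin 3) ℚ)) (q : MvPolynomial (Fin 3) ℚ)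
    (n d : ℕ) :
    (p * (Polynomial.C q * Polynomial.X ^ n)).coeff d =
      if n ≤ d then p.coeff (d - n) * q else 0 := by
  rw [show p * (Polynomial.C q * Polynomial.X ^ n) = (p * Polynomial.C q) * Polynomial.X ^ n by
    ring, Polynomial.coeff_mul_X_pow']
  split_ifs with h
  · rw [Polynomial.coeff_mul_C]
  · rfl

private lemma StE6_coeff01 (f : MvPolynomial (Fin 3) ℚ) :
    ∃ c0 c1 : ℚ, (StE6 f).coeff 0 = C c0 ∧ (StE6 f).coeff 1 = C c1 * X 0 := by
  induction f using MvPolynomial.induction_on with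
  | C a =>
    refine ⟨a, 0, ?_, ?_⟩ <;>
      simp [StE6, aeval_C, Polynomial.algebraMap_apply, algebraMap_eq]
  | add p q hp hq =>
    obtain ⟨p0, p1, hp0, hp1⟩ := hp
    obtain ⟨q0, q1, hq0, hq1⟩ := hq
    exact ⟨p0 + q0, p1 + q1, by simp [hp0, hq0], by simp [hp1, hq1, add_mul]⟩
  | mul_X p i hp =>
    obtain ⟨p0, p1, hp0, hp1⟩ := hp
    have hst : StE6 (p * X i)
        = StE6 p * (Polynomial.C (X i) * Polynomial.X ^ (![1,3,4] i : ℕ)) := by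
      simp [StE6]
    fin_cases i
    · refine ⟨0, p0, ?_, ?_⟩
      · rw [hst, coeff_mul_CXpow]; norm_num
      · rw [hst, coeff_mul_CXpow]; norm_num [hp0]
    · refine ⟨0, 0, ?_, ?_⟩
      · rw [hst, coeff_mul_CXpow]; norm_num
      · rw [hst, coeff_mul_CXpow]; norm_num
    · refine ⟨0, 0, ?_, ?_⟩
      · rw [hst, coeff_mul_CXpow]; norm_num
      · rw [hst, coeff_mul_CXpow]; norm_num

set_option maxHeartbeats 3200000 in
/-- Rigidity computation for `X = E₆/A₆·S¹`: a degree-preserving endomorphism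
with `φ(y₁) = k·y₁` is either the Adams operator `ψᵏ` or `ψᵏ ∘ τ`. -/
theorem E6_A6_rigidity (k a1 a2 b1 b2 b3 : ℚ)
    (y1 y3 y4 g8 g9 g12 : MvPolynomial (Fin 3) ℚ)
    (hy1 : y1 = X 0) (hy3 : y3 = X 1) (hy4 : y4 = X 2)
    (hg8 : g8 = 6 * y4 ^ 2 - 12 * y1 * y3 * y4 + 9 * y1 ^ 2 * y3 ^ 2 + 3 * y1 ^ 4 * y4
      - 6 * y1 ^ 5 * y3 + y1 ^ 8)
    (hg9 : g9 = -2 * y3 ^ 3 + 6 * y3 * y1 ^ 2 * y4 - 3 * y1 ^ 3 * y3 ^ 2 + 4 * y3 * y1 ^ 6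
      - 3 * y1 ^ 5 * y4 - y1 ^ 9)
    (hg12 : g12 = 4 * y4 ^ 3 - y3 ^ 4 + 6 * y3 ^ 2 * y1 ^ 2 * y4 - 4 * y3 ^ 3 * y1 ^ 3
      - 2 * y3 ^ 2 * y1 ^ 6 - 9 * y1 ^ 4 * y4 ^ 2 + 12 * y1 ^ 5 * y4 * y3
      - 6 * y1 ^ 8 * y4 + 4 * y1 ^ 9 * y3 - y1 ^ 12)
    (I : Ideal (MvPolynomial (Fin 3) ℚ)) (hI : I = Ideal.span {g8, g9, g12})
    (φ : MvPolynomial (Fin 3) ℚ →ₐ[ℚ] MvPolynomial (Fin 3) ℚ)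
    (hφ1 : φ y1 = C k * y1)
    (hφ3 : φ y3 = C a1 * y1 ^ 3 + C a2 * y3)
    (hφ4 : φ y4 = C b1 * y1 ^ 4 + C b2 * y1 * y3 + C b3 * y4)
    (h8 : φ g8 ∈ I) (h9 : φ g9 ∈ I) (h12 : φ g12 ∈ I) :
    (a1 = 0 ∧ a2 = k ^ 3 ∧ b1 = 0 ∧ b2 = 0 ∧ b3 = k ^ 4) ∨
    (a1 = k ^ 3 ∧ a2 = -k ^ 3 ∧ b1 = k ^ 4 ∧ b2 = -2 * k ^ 4 ∧ b3 = k ^ 4) := by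
  subst hy1 hy3 hy4 hg8 hg9 hg12 hI
  have hφg8 : φ (6 * X 2 ^ 2 - 12 * X 0 * X 1 * X 2 + 9 * X 0 ^ 2 * X 1 ^ 2 + 3 * X 0 ^ 4 * X 2 - 6 * X 0 ^ 5 * X 1 + X 0 ^ 8) = 6 * (C b1 * X 0 ^ 4 + C b2 * X 0 * X 1 + C b3 * X 2) ^ 2 - 12 * (C k * X 0) * (C a1 * X 0 ^ 3 + C a2 * X 1) * (C b1 * X 0 ^ 4 + C b2 * X 0 * X 1 + C b3 * X 2) + 9 * (C k * X 0) ^ 2 * (C a1 * X 0 ^ 3 + C a2 * X 1) ^ 2 + 3 * (C k * X 0) ^ 4 * (C b1 * X 0 ^ 4 + C b2 * X 0 * X 1 + C b3 * X 2) - 6 * (C k * X 0) ^ 5 * (C a1 * X 0 ^ 3 + C a2 * X 1) + (C k * X 0) ^ 8 := by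
    simp only [map_sub, map_add, map_mul, map_pow, map_ofNat, map_neg, hφ1, hφ3, hφ4]
  have hφg9 : φ (-2 * X 1 ^ 3 + 6 * X 1 * X 0 ^ 2 * X 2 - 3 * X 0 ^ 3 * X 1 ^ 2 + 4 * X 1 * X 0 ^ 6 - 3 * X 0 ^ 5 * X 2 - X 0 ^ 9) = -2 * (C a1 * X 0 ^ 3 + C a2 * X 1) ^ 3 + 6 * (C a1 * X 0 ^ 3 + C a2 * X 1) * (C k * X 0) ^ 2 * (C b1 * X 0 ^ 4 + C b2 * X 0 * X 1 + C b3 * X 2) - 3 * (C k * X 0) ^ 3 * (C a1 * X 0 ^ 3 + C a2 * X 1) ^ 2 + 4 * (C a1 * X 0 ^ 3 + C a2 * X 1) * (C k * X 0) ^ 6 - 3 * (C k * X 0) ^ 5 * (C b1 * X 0 ^ 4 + C b2 * X 0 * X 1 + C b3 * X 2) - (C k * X 0) ^ 9 := by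
    simp only [map_sub, map_add, map_mul, map_pow, map_ofNat, map_neg, hφ1, hφ3, hφ4]
  have hStG8 : StE6 (6 * X 2 ^ 2 - 12 * X 0 * X 1 * X 2 + 9 * X 0 ^ 2 * X 1 ^ 2 + 3 * X 0 ^ 4 * X 2 - 6 * X 0 ^ 5 * X 1 + X 0 ^ 8) = Polynomial.C (6 * X 2 ^ 2 - 12 * X 0 * X 1 * X 2 + 9 * X 0 ^ 2 * X 1 ^ 2 + 3 * X 0 ^ 4 * X 2 - 6 * X 0 ^ 5 * X 1 + X 0 ^ 8) * Polynomial.X ^ 8 := by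
    simp only [map_add, map_sub, map_mul, map_pow, map_ofNat, map_neg, StE6, aeval_X, aeval_C,
      Polynomial.algebraMap_apply, algebraMap_eq,
      Matrix.cons_val_zero, Matrix.cons_val_one, Matrix.head_cons, Matrix.cons_val_two,
      Matrix.tail_cons]
    ring
  have hStG9 : StE6 (-2 * X 1 ^ 3 + 6 * X 1 * X 0 ^ 2 * X 2 - 3 * X 0 ^ 3 * X 1 ^ 2 + 4 * X 1 * X 0 ^ 6 - 3 * X 0 ^ 5 * X 2 - X 0 ^ 9) = Polynomial.C (-2 * X 1 ^ 3 + 6 * X 1 * X 0 ^ 2 * X 2 - 3 * X 0 ^ 3 * X 1 ^ 2 + 4 * X 1 * X 0 ^ 6 - 3 * X 0 ^ 5 * X 2 - X 0 ^ 9) * Polynomial.X ^ 9 := by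
    simp only [map_add, map_sub, map_mul, map_pow, map_ofNat, map_neg, StE6, aeval_X, aeval_C,
      Polynomial.algebraMap_apply, algebraMap_eq,
      Matrix.cons_val_zero, Matrix.cons_val_one, Matrix.head_cons, Matrix.cons_val_two,
      Matrix.tail_cons]
    ring
  have hStG12 : StE6 (4 * X 2 ^ 3 - X 1 ^ 4 + 6 * X 1 ^ 2 * X 0 ^ 2 * X 2 - 4 * X 1 ^ 3 * X 0 ^ 3 - 2 * X 1 ^ 2 * X 0 ^ 6 - 9 * X 0 ^ 4 * X 2 ^ 2 + 12 * X 0 ^ 5 * X 2 * X 1 - 6 * X 0 ^ 8 * X 2 + 4 * X 0 ^ 9 * X 1 - X 0 ^ 12) = Polynomial.C (4 * X 2 ^ 3 - X 1 ^ 4 + 6 * X 1 ^ 2 * X 0 ^ 2 * X 2 - 4 * X 1 ^ 3 * X 0 ^ 3 - 2 * X 1 ^ 2 * X 0 ^ 6 - 9 * X 0 ^ 4 * X 2 ^ 2 + 12 * X 0 ^ 5 * X 2 * X 1 - 6 * X 0 ^ 8 * X 2 + 4 * X 0 ^ 9 * X 1 - X 0 ^ 12) * Polynomial.X ^ 12 :=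 by
    simp only [map_add, map_sub, map_mul, map_pow, map_ofNat, map_neg, StE6, aeval_X, aeval_C,
      Polynomial.algebraMap_apply, algebraMap_eq,
      Matrix.cons_val_zero, Matrix.cons_val_one, Matrix.head_cons, Matrix.cons_val_two,
      Matrix.tail_cons]
    ring
  have hStE8 : StE6 (6 * (C b1 * X 0 ^ 4 + C b2 * X 0 * X 1 + C b3 * X 2) ^ 2 - 12 * (C k * X 0) * (C a1 * X 0 ^ 3 + C a2 * X 1) * (C b1 * X 0 ^ 4 + C b2 * X 0 * X 1 + C b3 * X 2) + 9 * (C k * X 0) ^ 2 * (C a1 * X 0 ^ 3 + C a2 * X 1) ^ 2 + 3 * (C k * X 0) ^ 4 * (C b1 * X 0 ^ 4 + C b2 * X 0 * X 1 + C b3 * X 2) - 6 * (C k * X 0) ^ 5 * (C a1 * X 0 ^ 3 + C a2 * X 1) + (C k * X 0) ^ 8) = Polynomial.C (6 * (C b1 * X 0 ^ 4 + C b2 * X 0 * X 1 + C b3 * X 2) ^ 2 - 12 * (C k * X 0) * (C a1 * X 0 ^ 3 + C a2 * X 1) * (C b1 * X 0 ^ 4 + C b2 * X 0 * X 1 + C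 b3 * X 2) + 9 * (C k * X 0) ^ 2 * (C a1 * X 0 ^ 3 + C a2 * X 1) ^ 2 + 3 * (C k * X 0) ^ 4 * (C b1 * X 0 ^ 4 + C b2 * X 0 * X 1 + C b3 * X 2) - 6 * (C k * X 0) ^ 5 * (C a1 * X 0 ^ 3 + C a2 * X 1) + (C k * X 0) ^ 8) * Polynomial.X ^ 8 := by
    simp only [map_add, map_sub, map_mul, map_pow, map_ofNat, map_neg, StE6, aeval_X, aeval_C,
      Polynomial.algebraMap_apply, algebraMap_eq,
      Matrix.cons_val_zero, Matrix.cons_val_one, Matrix.head_cons, Matrix.cons_val_two,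
      Matrix.tail_cons]
    ring
  have hStE9 : StE6 (-2 * (C a1 * X 0 ^ 3 + C a2 * X 1) ^ 3 + 6 * (C a1 * X 0 ^ 3 + C a2 * X 1) * (C k * X 0) ^ 2 * (C b1 * X 0 ^ 4 + C b2 * X 0 * X 1 + C b3 * X 2) - 3 * (C k * X 0) ^ 3 * (C a1 * X 0 ^ 3 + C a2 * X 1) ^ 2 + 4 * (C a1 * X 0 ^ 3 + C a2 * X 1) * (C k * X 0) ^ 6 - 3 * (C k * X 0) ^ 5 * (C b1 * X 0 ^ 4 + C b2 * X 0 * X 1 + C b3 * X 2) - (C k * X 0) ^ 9) = Polynomial.C (-2 * (C a1 * X 0 ^ 3 + C a2 * X 1) ^ 3 + 6 * (C a1 * X 0 ^ 3 + C a2 * X 1) * (C k * X 0) ^ 2 * (C b1 * X 0 ^ 4 + C b2 * X 0 * X 1 + C b3 * X 2) - 3 * (C k * X 0) ^ 3 * (C a1 * X 0 ^ 3 + C a2 * X 1) ^ 2 + 4 * (C a1 * X 0 ^ 3 + C a2 * X 1) * (C k * X 0) ^ 6 - 3 * (C k * X 0) ^ 5 * (C b1 * X 0 ^ 4 + C b2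 * X 0 * X 1 + C b3 * X 2) - (C k * X 0) ^ 9) * Polynomial.X ^ 9 := by
    simp only [map_add, map_sub, map_mul, map_pow, map_ofNat, map_neg, StE6, aeval_X, aeval_C,
      Polynomial.algebraMap_apply, algebraMap_eq,
      Matrix.cons_val_zero, Matrix.cons_val_one, Matrix.head_cons, Matrix.cons_val_two,
      Matrix.tail_cons]
    ring
  obtain ⟨f1, z, hz, hrep⟩ := Ideal.mem_span_insert.mp h8
  obtain ⟨f2, f3, hz2⟩ := Ideal.mem_span_pair.mp hz
  obtain ⟨f1', z', hz', hrep'⟩ := Ideal.mem_span_insert.mp h9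
  obtain ⟨f2', f3', hz2'⟩ := Ideal.mem_span_pair.mp hz'
  rw [← hz2, hφg8] at hrep
  rw [← hz2', hφg9] at hrep'
  have E2 : StE6 (6 * (C b1 * X 0 ^ 4 + C b2 * X 0 * X 1 + C b3 * X 2) ^ 2 - 12 * (C k * X 0) * (C a1 * X 0 ^ 3 + C a2 * X 1) * (C b1 * X 0 ^ 4 + C b2 * X 0 * X 1 + C b3 * X 2) + 9 * (C k * X 0) ^ 2 * (C a1 * X 0 ^ 3 + C a2 * X 1) ^ 2 + 3 * (C k * X 0) ^ 4 * (C b1 * X 0 ^ 4 + C b2 * X 0 * X 1 + C b3 * X 2) - 6 * (C k * X 0) ^ 5 * (C a1 * X 0 ^ 3 + C a2 * X 1) + (C k * X 0) ^ 8)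
      = StE6 f1 * StE6 (6 * X 2 ^ 2 - 12 * X 0 * X 1 * X 2 + 9 * X 0 ^ 2 * X 1 ^ 2 + 3 * X 0 ^ 4 * X 2 - 6 * X 0 ^ 5 * X 1 + X 0 ^ 8) + (StE6 f2 * StE6 (-2 * X 1 ^ 3 + 6 * X 1 * X 0 ^ 2 * X 2 - 3 * X 0 ^ 3 * X 1 ^ 2 + 4 * X 1 * X 0 ^ 6 - 3 * X 0 ^ 5 * X 2 - X 0 ^ 9) + StE6 f3 * StE6 (4 * X 2 ^ 3 - X 1 ^ 4 + 6 * X 1 ^ 2 * X 0 ^ 2 * X 2 - 4 * X 1 ^ 3 * X 0 ^ 3 - 2 * X 1 ^ 2 * X 0 ^ 6 - 9 * X 0 ^ 4 * X 2 ^ 2 + 12 * X 0 ^ 5 * X 2 * X 1 - 6 * X 0 ^ 8 * X 2 + 4 * X 0 ^ 9 * X 1 - X 0 ^ 12)) := by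
    rw [← map_mul, ← map_mul, ← map_mul, ← map_add, ← map_add, ← hrep]
  rw [hStE8, hStG8, hStG9, hStG12] at E2
  have P8 := congrArg (fun p => Polynomial.coeff p 8) E2
  obtain ⟨c0, c1x, hf10, hf11⟩ := StE6_coeff01 f1
  simp only [coeff_mul_CXpow, Polynomial.coeff_add, Polynomial.coeff_C_mul,
    Polynomial.coeff_X_pow, hf10, hf11] at P8
  norm_num at P8
  have E2' : StE6 (-2 * (C a1 * X 0 ^ 3 + C a2 * X 1) ^ 3 + 6 * (C a1 * X 0 ^ 3 + C a2 * X 1) * (C k * X 0) ^ 2 * (C b1 * X 0 ^ 4 + C b2 * X 0 * X 1 + C b3 * X 2) - 3 * (C k * X 0) ^ 3 * (C a1 * X 0 ^ 3 + C a2 * X 1) ^ 2 + 4 * (C a1 * X 0 ^ 3 + C a2 * X 1) * (C k * X 0) ^ 6 - 3 * (C k * X 0) ^ 5 * (C b1 * X 0 ^ 4 + C b2 * X 0 * X 1 + C b3 * X 2) - (C k * X 0) ^ 9)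
      = StE6 f1' * StE6 (6 * X 2 ^ 2 - 12 * X 0 * X 1 * X 2 + 9 * X 0 ^ 2 * X 1 ^ 2 + 3 * X 0 ^ 4 * X 2 - 6 * X 0 ^ 5 * X 1 + X 0 ^ 8) + (StE6 f2' * StE6 (-2 * X 1 ^ 3 + 6 * X 1 * X 0 ^ 2 * X 2 - 3 * X 0 ^ 3 * X 1 ^ 2 + 4 * X 1 * X 0 ^ 6 - 3 * X 0 ^ 5 * X 2 - X 0 ^ 9) + StE6 f3' * StE6 (4 * X 2 ^ 3 - X 1 ^ 4 + 6 * X 1 ^ 2 * X 0 ^ 2 * X 2 - 4 * X 1 ^ 3 * X 0 ^ 3 - 2 * X 1 ^ 2 * X 0 ^ 6 - 9 * X 0 ^ 4 * X 2 ^ 2 + 12 * X 0 ^ 5 * X 2 * X 1 - 6 * X 0 ^ 8 * X 2 + 4 * X 0 ^ 9 * X 1 - X 0 ^ 12)) := by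
    rw [← map_mul, ← map_mul, ← map_mul, ← map_add, ← map_add, ← hrep']
  rw [hStE9, hStG8, hStG9, hStG12] at E2'
  have P9 := congrArg (fun p => Polynomial.coeff p 9) E2'
  obtain ⟨c1b, c1, hf10', hf11'⟩ := StE6_coeff01 f1'
  obtain ⟨c2, c2x, hf20', hf21'⟩ := StE6_coeff01 f2'
  simp only [coeff_mul_CXpow, Polynomial.coeff_add, Polynomial.coeff_C_mul,
    Polynomial.coeff_X_pow, hf10', hf11', hf20', hf21'] at P9
  norm_num at P9
  have hE8p0 := congrArg (eval (![1, 0, -1] : Fin 3 → ℚ)) P8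
  have hE8p1 := congrArg (eval (![1, -1, -1] : Fin 3 → ℚ)) P8
  have hE8p2 := congrArg (eval (![1, 2, 0] : Fin 3 → ℚ)) P8
  have hE8p3 := congrArg (eval (![-1, 1, 0] : Fin 3 → ℚ)) P8
  have hE8p4 := congrArg (eval (![0, 0, -2] : Fin 3 → ℚ)) P8
  have hE8p5 := congrArg (eval (![1, 2, -1] : Fin 3 → ℚ)) P8
  simp only [map_add, map_sub, map_mul, map_pow, map_ofNat, map_neg, eval_C, eval_X,
    Matrix.cons_val_zero, Matrix.cons_val_one, Matrix.head_cons, Matrix.cons_val_two,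
    Matrix.tail_cons] at hE8p0 hE8p1 hE8p2 hE8p3 hE8p4 hE8p5
  have hq1 : 6*b3^2 - 6*c0 = 0 := by
    linear_combination (1/4)*hE8p4
  have hq3 : 6*b2^2 - 12*k*a2*b2 + 9*k^2*a2^2 - 9*c0 = 0 := by
    linear_combination (-1/2)*hE8p0 + (1/3)*hE8p1 + (1/6)*hE8p5
  have hq4 : 12*b1*b3 - 12*k*a1*b3 + 3*k^4*b3 - 3*c0 = 0 := by
    linear_combination (-2/3)*hE8p1 + (1/3)*hE8p2 + (2/3)*hE8p3 + (1/4)*hE8p4 - (1/3)*hE8p5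
  have hq6 : 6*b1^2 - 12*k*a1*b1 + 9*k^2*a1^2 + 3*k^4*b1 - 6*k^5*a1 + k^8 - c0 = 0 := by
    linear_combination 1*hE8p0 - (2/3)*hE8p1 + (1/3)*hE8p2 + (2/3)*hE8p3 - (1/3)*hE8p5
  have hE9p0 := congrArg (eval (![1, 1, -2] : Fin 3 → ℚ)) P9
  have hE9p1 := congrArg (eval (![-1, 0, 2] : Fin 3 → ℚ)) P9
  have hE9p2 := congrArg (eval (![0, -2, -1] : Fin 3 → ℚ)) P9
  have hE9p3 := congrArg (eval (![-1, 1, -2] : Fin 3 → ℚ)) P9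
  have hE9p4 := congrArg (eval (![1, 2, 1] : Fin 3 → ℚ)) P9
  have hE9p5 := congrArg (eval (![1, 2, 0] : Fin 3 → ℚ)) P9
  have hE9p6 := congrArg (eval (![1, 1, 2] : Fin 3 → ℚ)) P9
  simp only [map_add, map_sub, map_mul, map_pow, map_ofNat, map_neg, eval_C, eval_X,
    Matrix.cons_val_zero, Matrix.cons_val_one, Matrix.head_cons, Matrix.cons_val_two,
    Matrix.tail_cons] at hE9p0 hE9p1 hE9p2 hE9p3 hE9p4 hE9p5 hE9p6
  have hn1 : -2*a2^3 + 2*c2 = 0 := by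
    linear_combination (-1/8)*hE9p2
  have hn2 : -6*c1 = 0 := by
    linear_combination (1/2)*hE9p0 - (1/2)*hE9p1 + (1/8)*hE9p2 + (1/6)*hE9p3 + (5/3)*hE9p4 - (3/2)*hE9p5 - (1)*hE9p6
  have hn3 : 6*k^2*a2*b3 + 12*c1 - 6*c2 = 0 := by
    linear_combination (-1/4)*hE9p0 + (1/2)*hE9p1 - (1/8)*hE9p2 - (1/6)*hE9p3 - (2/3)*hE9p4 + (1/2)*hE9p5 + (3/4)*hE9p6
  have hn4 : -6*a1*a2^2 + 6*k^2*a2*b2 - 3*k^3*a2^2 - 9*c1 + 3*c2 = 0 := by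
    linear_combination (1/2)*hE9p0 - (1)*hE9p1 + (1/2)*hE9p2 + (1/6)*hE9p3 + (8/3)*hE9p4 - (2)*hE9p5 - (2)*hE9p6
  have hn5 : 6*k^2*a1*b3 - 3*k^5*b3 - 3*c1 + 3*c2 = 0 := by
    linear_combination (-1/2)*hE9p1 + (1/8)*hE9p2 + (1/6)*hE9p3 + (2/3)*hE9p4 - (1/2)*hE9p5 - (1/2)*hE9p6
  have hn7 : -2*a1^3 + 6*k^2*a1*b1 - 3*k^3*a1^2 + 4*k^6*a1 - 3*k^5*b1 - k^9 - c1 + c2 = 0 := by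
    linear_combination (-2)*hE9p0 + 2*hE9p1 - (3/4)*hE9p2 - (1)*hE9p3 - (8)*hE9p4 + 7*hE9p5 + 5*hE9p6

  -- scalar analysis
  by_cases ha2 : a2 = 0
  · -- a2 = 0 : branch forces k = 0 and ψ^0, or contradiction
    subst ha2
    have h23 : 2*b2^2 - 3*b3^2 = 0 := by linear_combination (1/3)*hq3 + (-1/2)*hq1
    have hb3z : b3 = 0 := by
      by_contra hb3
      have h6 : ((2*b2/b3))^2 = 3*((2:ℤ):ℚ) := by
        rw [div_pow, div_eq_iff (pow_ne_zero 2 hb3)]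
        push_cast
        linear_combination 2*h23
      exact E6aux_sq _ 2 (by norm_num) h6
    subst hb3z
    have hb2z : b2 = 0 := by
      have h : b2^2 = 0 := by linear_combination (1/2)*h23
      exact pow_eq_zero_iff two_ne_zero |>.mp h
    subst hb2z
    have hc1 : c1 = 0 := by linear_combination (-1/6)*hn2
    have hc2 : c2 = 0 := by linear_combination (1/2)*hn1
    have hc0 : c0 = 0 := by linear_combination (-1/6)*hq1
    by_cases hk : k = 0
    · subst hk
      left
      have ha1 : a1 = 0 := by
        have h : a1^3 = 0 := by linear_combination (-1/2)*hn7 - (1/2)*hc1 + (1/2)*hc2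
        exact pow_eq_zero_iff three_ne_zero |>.mp h
      have hb1 : b1 = 0 := by
        have h : b1^2 = 0 := by linear_combination (1/6)*hq6 + (1/6)*hc0
        exact pow_eq_zero_iff two_ne_zero |>.mp h
      exact ⟨ha1, by norm_num, hb1, rfl, by norm_num⟩
    · exfalso
      have hq6' : 6*b1^2 - 12*k*a1*b1 + 9*k^2*a1^2 + 3*k^4*b1 - 6*k^5*a1 + k^8 = 0 := by
        linear_combination hq6 + hc0
      have hn7' : 6*k^2*a1*b1 - 3*k^5*b1 - 2*a1^3 - 3*k^3*a1^2 + 4*k^6*a1 - k^9 = 0 := by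
        linear_combination hn7 + hc1 - hc2
      by_cases h2a : 2*a1 - k^3 = 0
      · have h38 : (12*b1 - 3*k^4)^2 = 3*k^8 := by
          linear_combination 24*hq6' + (144*k*b1 - 108*k^2*a1 + 18*k^5)*h2a
        have h3 : ((12*b1 - 3*k^4)/k^4)^2 = 3*((1:ℤ):ℚ) := by
          rw [div_pow, div_eq_iff (pow_ne_zero 2 (pow_ne_zero 4 hk))]
          push_cast
          linear_combination h38
        exact E6aux_sq _ 1 (by norm_num) h3
      · have key : 6*(2*a1-k^3)^2*((a1^2 - a1*k^3)^2 + (2*a1*k^3 - k^6)^2) = 0 := by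
          linear_combination (9*k^4*(2*a1-k^3)^2)*hq6'
            - (12*a1^3 + 36*k^2*a1*b1 - 54*k^3*a1^2 - 18*k^5*b1 + 30*k^6*a1 - 3*k^9)*hn7'
        have hA : (0:ℚ) < (2*a1-k^3)^2 := pow_two_pos_of_ne_zero h2a
        have hC : (0:ℚ) < (2*a1*k^3 - k^6)^2 := by
          have h : 2*a1*k^3 - k^6 = k^3*(2*a1 - k^3) := by ring
          rw [h]
          exact pow_two_pos_of_ne_zero (mul_ne_zero (pow_ne_zero 3 hk) h2a)
        have hsum : (a1^2 - a1*k^3)^2 + (2*a1*k^3 - k^6)^2 = 0 := by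
          rcases mul_eq_zero.mp key with h'|h'
          · exact absurd h' (mul_ne_zero (by norm_num) (ne_of_gt hA))
          · exact h'
        have hB := sq_nonneg (a1^2 - a1*k^3)
        linarith
  · -- a2 ≠ 0 : the two genuine branches
    have hc1 : c1 = 0 := by linear_combination (-1/6)*hn2
    have hc2 : c2 = a2^3 := by linear_combination (1/2)*hn1
    have hc0 : c0 = b3^2 := by linear_combination (-1/6)*hq1
    have e1 : k^2*b3 - a2^2 = 0 := by
      have h : a2*(k^2*b3 - a2^2) = 0 := by linear_combination (1/6)*hn3 - 2*hc1 + hc2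
      exact (mul_eq_zero.mp h).resolve_left ha2
    have hk : k ≠ 0 := by
      intro h
      apply ha2
      rw [h] at e1
      have h2 : a2^2 = 0 := by linear_combination -e1
      exact pow_eq_zero_iff two_ne_zero |>.mp h2
    have hb3 : b3 ≠ 0 := by
      intro h
      apply ha2
      rw [h] at e1
      have h2 : a2^2 = 0 := by linear_combination -e1
      exact pow_eq_zero_iff two_ne_zero |>.mp h2
    have eA : 2*a1 - k^3 + a2 = 0 := by
      have h : (3*(k^2*b3))*(2*a1 - k^3 + a2) = 0 := by
        linear_combination hn5 + 3*a2*e1 + 3*hc1 - 3*hc2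
      rcases mul_eq_zero.mp h with h'|h'
      · exfalso
        rcases mul_eq_zero.mp h' with h''|h''
        · norm_num at h''
        · rcases mul_eq_zero.mp h'' with h3|h3
          · exact pow_ne_zero 2 hk h3
          · exact hb3 h3
      · exact h'
    have e3 : k^2*b2 - 2*a1*a2 = 0 := by
      have h : a2*(k^2*b2 - 2*a1*a2) = 0 := by
        linear_combination (1/6)*hn4 - (1/2)*a2^2*eA + (3/2)*hc1 - (1/2)*hc2
      exact (mul_eq_zero.mp h).resolve_left ha2
    have e5 : a1*(a1+a2) = 0 := by
      have h : a2^2*(12*(a1*(a1+a2))) = 0 := by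
        linear_combination (k^4)*hq3 + 9*k^4*hc0
          + (-(6*(k^2*b2-2*a1*a2)+24*a1*a2-12*k^3*a2))*e3
          + (9*(k^2*b3-a2^2)+18*a2^2)*e1
          + (-(24*a1*a2^2 - 18*a2^2*(a2+2*a1) + 9*a2^2*(2*a1-k^3+a2)))*eA
      rcases mul_eq_zero.mp h with h'|h'
      · exact absurd (pow_eq_zero_iff two_ne_zero |>.mp h') ha2
      · linarith
    rcases mul_eq_zero.mp e5 with h0|h0
    · left
      have ha2v : a2 = k^3 := by linarith
      have hb3v : b3 = k^4 := by
        have h : k^2*b3 = k^2*k^4 := by linear_combination e1 + (a2 + k^3)*ha2v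
        exact mul_left_cancel₀ (pow_ne_zero 2 hk) h
      have hb2v : b2 = 0 := by
        have h : k^2*b2 = k^2*0 := by linear_combination e3 + 2*a2*h0
        exact mul_left_cancel₀ (pow_ne_zero 2 hk) h
      have hb1v : b1 = 0 := by
        have h : 12*k^4*b1 = 12*k^4*0 := by
          linear_combination hq4 + (-12*b1+3*b3)*hb3v + 12*k*b3*h0 + 3*hc0
        exact mul_left_cancel₀ (mul_ne_zero (by norm_num) (pow_ne_zero 4 hk)) h
      exact ⟨h0, ha2v, hb1v, hb2v, hb3v⟩
    · right
      have ha1v : a1 = k^3 := by linarith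
      have ha2v : a2 = -k^3 := by linarith
      have hb3v : b3 = k^4 := by
        have h : k^2*b3 = k^2*k^4 := by linear_combination e1 + (a2 - k^3)*ha2v
        exact mul_left_cancel₀ (pow_ne_zero 2 hk) h
      have hb2v : b2 = -2*k^4 := by
        have h : k^2*b2 = k^2*(-2*k^4) := by linear_combination e3 + 2*a2*ha1v + 2*k^3*ha2v
        exact mul_left_cancel₀ (pow_ne_zero 2 hk) h
      have hb1v : b1 = k^4 := by
        have h : 12*k^4*b1 = 12*k^4*k^4 := by
          linear_combination hq4 + (-12*b1+12*k*a1+3*b3)*hb3v + 12*k*k^4*ha1v + 3*hc0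
        exact mul_left_cancel₀ (mul_ne_zero (by norm_num) (pow_ne_zero 4 hk)) h
      exact ⟨ha1v, ha2v, hb1v, hb2v, hb3v⟩
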